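/- arXiv:2304.02091 — 3 statements merged into one kernel-verified Lean document; each statement's English description precedes it below -/
import Mathlib

section
/- Let P be a multivariate polynomial over a field F of characteristic 2 in variables y_1,...,y_n, and let T ⊆ [n]. Define Q to be the polynomial obtained from P by keeping exactly those monomials divisible by ∏_{i∈T} y_i (setting the coefficients of all other monomials to zero). Then Q = ∑_{I ⊆ T} P_{−I}, where P_{−I} denotes P with the variables y_i for i ∈ I substituted by 0. -/
open MvPolynomial

lemma coeff_aeval_sub {F : Type} [Field F] {n : ℕ}
    (P : MvPolynomial (Fin n) F) (I : Finset (Fin n)) (m : Fin n →₀ ℕ) :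
    (MvPolynomial.aeval (fun i => if i ∈ I then 0 else (X i : MvPolynomial (Fin n) F)) P).coeff m
      = if ∀ i ∈ I, m i = 0 then P.coeff m else 0 := by
  classical
  conv_lhs => rw [P.as_sum, map_sum]
  rw [MvPolynomial.coeff_sum]
  have key : ∀ d : Fin n →₀ ℕ,
      (MvPolynomial.aeval (fun i => if i ∈ I then 0 else (X i : MvPolynomial (Fin n) F))
        (monomial d (P.coeff d)))
      = if ∀ i ∈ I, d i = 0 then monomial d (P.coeff d) else 0 := by
    intro d
    rw [aeval_monomial]
    by_cases h : ∀ i ∈ I, d i = 0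
    · rw [if_pos h]
      have h2 : (Finsupp.prod d fun i e => (if i ∈ I then 0 else (X i : MvPolynomial (Fin n) F)) ^ e)
          = Finsupp.prod d fun i e => (X i : MvPolynomial (Fin n) F) ^ e := by
        apply Finset.prod_congr rfl
        intro i hi
        have : i ∉ I := fun hI => (Finsupp.mem_support_iff.mp hi) (h i hI)
        simp [this]
      rw [h2, algebraMap_eq, ← monomial_eq]
    · rw [if_neg h]
      push_neg at h
      obtain ⟨i, hiI, hid⟩ := h
      have hsup : i ∈ d.support := Finsupp.mem_support_iff.mpr hid
      have h3 : (Finsupp.prod d fun i e => (if i ∈ I then 0 else (X i : MvPolynomial (Fin n) F)) ^ e) = 0 := by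
        apply Finset.prod_eq_zero hsup
        simp [hiI, zero_pow, hid]
      rw [h3, mul_zero]
  simp_rw [key, apply_ite (coeff m), coeff_monomial, coeff_zero]
  have step : ∀ d ∈ P.support,
      (if ∀ i ∈ I, d i = 0 then if d = m then P.coeff d else 0 else 0)
      = if d = m then (if ∀ i ∈ I, m i = 0 then P.coeff m else 0) else 0 := by
    intro d _
    by_cases hdm : d = m
    · subst hdm; simp
    · simp [hdm]
  rw [Finset.sum_congr rfl step, Finset.sum_ite_eq' P.support m]
  by_cases hm : m ∈ P.support
  · rw [if_pos hm]
  · rw [if_neg hm]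
    have := MvPolynomial.notMem_support_iff.mp hm
    simp [this]

theorem inclusion_exclusion_sieve_char_two
    {F : Type} [Field F] [CharP F 2] {n : ℕ}
    (P Q : MvPolynomial (Fin n) F) (T : Finset (Fin n))
    (hQ : ∀ m : Fin n →₀ ℕ, Q.coeff m = if ∀ i ∈ T, 1 ≤ m i then P.coeff m else 0) :
    Q = ∑ I ∈ T.powerset,
        MvPolynomial.aeval (fun i => if i ∈ I then 0 else (X i : MvPolynomial (Fin n) F)) P := by
  classical
  ext m
  rw [hQ m, MvPolynomial.coeff_sum]
  simp_rw [coeff_aeval_sub]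
  set Z : Finset (Fin n) := T.filter (fun i => m i = 0) with hZ
  have hfil : T.powerset.filter (fun I => ∀ i ∈ I, m i = 0) = Z.powerset := by
    ext I
    simp only [Finset.mem_filter, Finset.mem_powerset, hZ, Finset.subset_iff,
      Finset.mem_filter]
    exact ⟨fun h x hx => ⟨h.1 hx, h.2 x hx⟩, fun h => ⟨fun x hx => (h hx).1, fun x hx => (h hx).2⟩⟩
  rw [← Finset.sum_filter, hfil, Finset.sum_const, Finset.card_powerset, nsmul_eq_mul]
  have h2 : ((2 : ℕ) : F) = 0 := by
    exact_mod_cast CharP.cast_eq_zero F 2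
  by_cases hz : Z = ∅
  · have hcond : ∀ i ∈ T, 1 ≤ m i := by
      intro i hi
      by_contra hlt
      have : m i = 0 := by omega
      have : i ∈ Z := by simp [hZ, hi, this]
      simp [hz] at this
    rw [if_pos hcond, hz]
    simp
  · have hcond : ¬ ∀ i ∈ T, 1 ≤ m i := by
      intro hall
      apply hz
      ext i
      simp only [hZ, Finset.mem_filter, Finset.notMem_empty, iff_false]
      rintro ⟨hi, h0⟩
      have := hall i hi
      omega
    rw [if_neg hcond]
    have hpos : 0 < Z.card := Finset.card_pos.mpr (Finset.nonempty_iff_ne_empty.mpr hz)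
    have h2' : (2 : F) = 0 := by exact_mod_cast CharP.cast_eq_zero F 2
    have : ((2 ^ Z.card : ℕ) : F) = 0 := by
      push_cast
      rw [h2', zero_pow (by omega)]
    rw [this, zero_mul]
end

section
/- Let H be a connected subgraph of an undirected graph G with vertex set U = V(H) and edge set F = E(H). Then every branching walk W = (T, φ) in G whose edge span equals F has size at least |F| + 1, and there exists such a branching walk of size exactly |F| + 1. -/
open SimpleGraph

private def pgraph {n : ℕ} (g : Fin (n+1) → Fin (n+1)) : SimpleGraph (Fin (n+1)) where
  Adj a b := a ≠ b ∧ ((a ≠ 0 ∧ b = g a) ∨ (b ≠ 0 ∧ a = g b))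
  symm := by constructor; intro a b ⟨h1, h2⟩; exact ⟨h1.symm, h2.symm⟩
  loopless := by constructor; intro a ⟨h1, _⟩; exact h1 rfl

private lemma walk_mem_iff {A : Type*} {G : SimpleGraph A} (S : Set A)
    (h : ∀ a b, G.Adj a b → (a ∈ S ↔ b ∈ S)) {u v : A} (w : G.Walk u v) :
    u ∈ S ↔ v ∈ S := by
  induction w with
  | nil => rfl
  | cons hadj _ ih => exact (h _ _ hadj).trans ih

section pg
variable {n : ℕ} {g : Fin (n+1) → Fin (n+1)}

private lemma pg_adj {a b : Fin (n+1)} :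
    (pgraph g).Adj a b ↔ a ≠ b ∧ ((a ≠ 0 ∧ b = g a) ∨ (b ≠ 0 ∧ a = g b)) := Iff.rfl

private lemma pg_le (hg : ∀ i, i ≠ 0 → g i < i) (hg0 : g 0 = 0) : ∀ i, g i ≤ i := by
  intro i
  by_cases h : i = 0
  · subst h; rw [hg0]
  · exact (hg i h).le

private lemma pg_iter_le (hg : ∀ i, i ≠ 0 → g i < i) (hg0 : g 0 = 0) : ∀ (k : ℕ) (i), g^[k] i ≤ i := by
  intro k
  induction k with
  | zero => intro i; simp
  | succ k ih =>
    intro i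
    rw [Function.iterate_succ_apply]
    exact (ih (g i)).trans (pg_le hg hg0 i)

private lemma pg_connected (hg : ∀ i, i ≠ 0 → g i < i) : (pgraph g).Connected := by
  rw [connected_iff]
  refine ⟨fun u v => ?_, ⟨0⟩⟩
  have key : ∀ (k : ℕ) (i : Fin (n+1)), i.val ≤ k → (pgraph g).Reachable i 0 := by
    intro k
    induction k with
    | zero =>
      intro i h
      have : i = 0 := Fin.ext (Nat.le_zero.mp h)
      subst this
      exact Reachable.refl 0
    | succ k ih =>
      intro i h
      by_cases hi : i = 0
      · subst hi; exact Reachable.refl 0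
      · have hlt := hg i hi
        refine (Adj.reachable (pg_adj.mpr ⟨hlt.ne', Or.inl ⟨hi, rfl⟩⟩)).trans (ih (g i) ?_)
        have : (g i).val < i.val := hlt
        omega
  exact (key n u (Nat.lt_succ_iff.mp u.isLt)).trans (key n v (Nat.lt_succ_iff.mp v.isLt)).symm

private lemma pg_bridge (hg : ∀ i, i ≠ 0 → g i < i) (hg0 : g 0 = 0) (i : Fin (n+1)) (hi : i ≠ 0) :
    (pgraph g).IsBridge s(i, g i) := by
  rw [isBridge_iff]
  rintro ⟨w⟩
  set S : Set (Fin (n+1)) := {j | ∃ k, g^[k] j = i} with hS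
  have hcross : ∀ a b, ((pgraph g).deleteEdges {s(i, g i)}).Adj a b → (a ∈ S ↔ b ∈ S) := by
    have key : ∀ a : Fin (n+1), a ≠ 0 → a ≠ i → (a ∈ S ↔ g a ∈ S) := by
      intro a _ hai
      constructor
      · rintro ⟨k, hk⟩
        cases k with
        | zero => exact absurd hk hai
        | succ k => exact ⟨k, by rwa [Function.iterate_succ_apply] at hk⟩
      · rintro ⟨k, hk⟩
        exact ⟨k + 1, by rwa [Function.iterate_succ_apply]⟩
    intro a b hab
    rw [deleteEdges_adj] at hab
    obtain ⟨⟨hne, hor⟩, hnot⟩ : (_ ∧ _) ∧ _ := ⟨pg_adj.mp hab.1, hab.2⟩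
    have hne' : s(a, b) ≠ s(i, g i) := fun h => hnot (by simp [h])
    rcases hor with ⟨ha, rfl⟩ | ⟨hb, rfl⟩
    · exact key a ha (fun h => hne' (by rw [h]))
    · exact (key b hb (fun h => hne' (by rw [h, Sym2.eq_swap]))).symm
  have := walk_mem_iff S hcross w
  have hiS : i ∈ S := ⟨0, rfl⟩
  have hgiS : g i ∉ S := by
    rintro ⟨k, hk⟩
    have := (pg_iter_le hg hg0 k (g i)).trans_lt (hg i hi)
    rw [hk] at this
    exact lt_irrefl _ this
  exact hgiS (this.mp hiS)

private lemma pg_isTree (hg : ∀ i, i ≠ 0 → g i < i) (hg0 : g 0 = 0) : (pgraph g).IsTree := by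
  refine ⟨pg_connected hg, ?_⟩
  rw [isAcyclic_iff_forall_adj_isBridge]
  intro v w hvw
  obtain ⟨hne, hor⟩ := pg_adj.mp hvw
  rcases hor with ⟨hv, rfl⟩ | ⟨hw, rfl⟩
  · exact pg_bridge hg hg0 v hv
  · rw [Sym2.eq_swap]; exact pg_bridge hg hg0 w hw
end pg

private lemma expand {V : Type} {G : SimpleGraph V} (H : G.Subgraph) (hH : H.Connected)
    {r : V} (hr : r ∈ H.verts) (C : Set V) (hrC : r ∈ C) (U : Set (Sym2 V))
    (hUC : ∀ e ∈ U, ∀ v ∈ e, v ∈ C) (hne : ∃ e ∈ H.edgeSet, e ∉ U) :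
    ∃ a b, s(a, b) ∈ H.edgeSet ∧ s(a, b) ∉ U ∧ a ∈ C := by
  obtain ⟨e, heF, heU⟩ := hne
  induction e using Sym2.ind with
  | _ x y =>
    have hadj : H.Adj x y := SimpleGraph.Subgraph.mem_edgeSet.mp heF
    have hx : x ∈ H.verts := H.edge_vert hadj
    by_cases hxC : x ∈ C
    · exact ⟨x, y, heF, heU, hxC⟩
    · have key : ∀ {u v : H.verts} (_ : H.coe.Walk u v), (u : V) ∈ C → (v : V) ∉ C →
          ∃ a b, H.Adj a b ∧ a ∈ C ∧ b ∉ C := by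
        intro u v w
        induction w with
        | nil => intro h h'; exact absurd h h'
        | @cons u u' v hadj' p ih =>
          intro hu hv
          by_cases h2 : (u' : V) ∈ C
          · exact ih h2 hv
          · exact ⟨u, u', hadj', hu, h2⟩
      obtain ⟨w⟩ := hH.coe ⟨r, hr⟩ ⟨x, hx⟩
      obtain ⟨a, b, hab, haC, hbC⟩ := key w hrC hxC
      refine ⟨a, b, SimpleGraph.Subgraph.mem_edgeSet.mpr hab, fun hmem => hbC ?_, haC⟩
      exact hUC _ hmem b (by simp)

private lemma greedy {V : Type} {G : SimpleGraph V} (H : G.Subgraph) (hH : H.Connected)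
    {r : V} (hr : r ∈ H.verts) :
    ∀ j, j ≤ H.edgeSet.ncard → ∃ (φ : ℕ → V) (f : ℕ → ℕ),
      φ 0 = r ∧ (∀ i, 1 ≤ i → i ≤ j → f i < i) ∧
      (∀ i, 1 ≤ i → i ≤ j → s(φ (f i), φ i) ∈ H.edgeSet) ∧
      Set.InjOn (fun i => s(φ (f i), φ i)) (Set.Icc 1 j) := by
  intro j
  induction j with
  | zero =>
    intro _
    refine ⟨fun _ => r, id, rfl, by omega, by omega, ?_⟩
    rw [Set.Icc_eq_empty (by norm_num)]
    exact Set.injOn_empty _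
  | succ j ih =>
    intro hj
    obtain ⟨φ, f, hφ0, hflt, hfF, hinj⟩ := ih (by omega)
    set U : Set (Sym2 V) := (fun i => s(φ (f i), φ i)) '' (Set.Icc 1 j) with hU
    have hUcard : U.ncard = j := by
      rw [hU, Set.ncard_image_of_injOn hinj,
        show Set.Icc 1 j = ((Finset.Icc 1 j : Finset ℕ) : Set ℕ) by simp, Set.ncard_coe_finset]
      simp
    have hne : ∃ e ∈ H.edgeSet, e ∉ U := by
      by_contra h
      push_neg at h
      have hsub : H.edgeSet ⊆ U := h
      have := Set.ncard_le_ncard hsub (Set.Finite.image _ (Set.finite_Icc 1 j))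
      omega
    have hUC : ∀ e ∈ U, ∀ v ∈ e, v ∈ φ '' (Set.Iic j) := by
      rintro e ⟨i, hi, rfl⟩ v hv
      simp only [Set.mem_Icc] at hi
      rcases Sym2.mem_iff.mp hv with h | h
      · exact ⟨f i, by simp only [Set.mem_Iic]; have := hflt i hi.1 hi.2; omega, h.symm⟩
      · exact ⟨i, by simp only [Set.mem_Iic]; omega, h.symm⟩
    obtain ⟨a, b, habF, habU, haC⟩ := expand H hH hr (φ '' (Set.Iic j))
      ⟨0, by simp, hφ0⟩ U hUC hne
    obtain ⟨i₀, hi₀, hφi₀⟩ := haC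
    simp only [Set.mem_Iic] at hi₀
    set φ' := Function.update φ (j+1) b with hφ'def
    set f' := Function.update f (j+1) i₀ with hf'def
    have hφ'le : ∀ i, i ≤ j → φ' i = φ i := fun i h =>
      Function.update_of_ne (by omega) _ _
    have hf'le : ∀ i, i ≤ j → f' i = f i := fun i h =>
      Function.update_of_ne (by omega) _ _
    have hφ'top : φ' (j+1) = b := Function.update_self _ _ _
    have hf'top : f' (j+1) = i₀ := Function.update_self _ _ _
    have eval_le : ∀ i, 1 ≤ i → i ≤ j → s(φ' (f' i), φ' i) = s(φ (f i), φ i) := by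
      intro i h1 h2
      rw [hf'le i h2, hφ'le i h2, hφ'le (f i) (by have := hflt i h1 h2; omega)]
    have eval_top : s(φ' (f' (j+1)), φ' (j+1)) = s(a, b) := by
      rw [hf'top, hφ'top, hφ'le i₀ hi₀, hφi₀]
    refine ⟨φ', f', ?_, ?_, ?_, ?_⟩
    · rw [hφ'le 0 (by omega)]; exact hφ0
    · intro i h1 h2
      rcases Nat.lt_or_ge i (j+1) with h | h
      · rw [hf'le i (by omega)]; exact hflt i h1 (by omega)
      · have : i = j + 1 := by omega
        subst this
        rw [hf'top]
        omega
    · intro i h1 h2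
      rcases Nat.lt_or_ge i (j+1) with h | h
      · rw [eval_le i h1 (by omega)]; exact hfF i h1 (by omega)
      · have : i = j + 1 := by omega
        subst this
        rw [eval_top]
        exact habF
    · intro x hx y hy heq
      simp only [Set.mem_Icc] at hx hy
      simp only at heq
      rcases Nat.lt_or_ge x (j+1) with h1 | h1 <;> rcases Nat.lt_or_ge y (j+1) with h2 | h2
      · rw [eval_le x hx.1 (by omega), eval_le y hy.1 (by omega)] at heq
        exact hinj (Set.mem_Icc.mpr ⟨hx.1, by omega⟩) (Set.mem_Icc.mpr ⟨hy.1, by omega⟩) heq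
      · have hy' : y = j + 1 := by omega
        subst hy'
        rw [eval_le x hx.1 (by omega), eval_top] at heq
        exact absurd ⟨x, Set.mem_Icc.mpr ⟨hx.1, by omega⟩, heq⟩ habU
      · have hx' : x = j + 1 := by omega
        subst hx'
        rw [eval_le y hy.1 (by omega), eval_top] at heq
        exact absurd ⟨y, Set.mem_Icc.mpr ⟨hy.1, by omega⟩, heq.symm⟩ habU
      · omega

theorem branching_walk_edge_span_connected_subgraph
    {V : Type} [Fintype V] [DecidableEq V]
    (G : SimpleGraph V) (H : G.Subgraph) (hH : H.Connected) :
    (∀ (α : Type) (inst : Fintype α) (T : SimpleGraph α), T.IsTree →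
      ∀ φ : T →g G, (Sym2.map φ) '' T.edgeSet = H.edgeSet →
        H.edgeSet.ncard + 1 ≤ @Fintype.card α inst) ∧
    (∃ (α : Type) (inst : Fintype α) (T : SimpleGraph α) (_ : T.IsTree)
        (φ : T →g G), (Sym2.map φ) '' T.edgeSet = H.edgeSet ∧
          @Fintype.card α inst = H.edgeSet.ncard + 1) := by
  constructor
  · intro α inst T hT φ hspan
    letI := inst
    have hfinE : T.edgeSet.Finite := Set.toFinite _
    have h1 : H.edgeSet.ncard ≤ T.edgeSet.ncard := by
      rw [← hspan]; exact Set.ncard_image_le hfinE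
    haveI : Fintype T.edgeSet := hfinE.fintype
    have h2 : T.edgeFinset.card + 1 = @Fintype.card α inst := hT.card_edgeFinset
    have h3 : T.edgeSet.ncard = T.edgeFinset.card := by
      rw [← SimpleGraph.coe_edgeFinset, Set.ncard_coe_finset]
    omega
  · obtain ⟨r, hr⟩ := hH.nonempty
    set m := H.edgeSet.ncard with hm
    obtain ⟨φ, f, hφ0, hflt, hfF, hinj⟩ := greedy H hH hr m le_rfl
    have hUeq : (fun i => s(φ (f i), φ i)) '' (Set.Icc 1 m) = H.edgeSet := by
      apply Set.eq_of_subset_of_ncard_le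
      · rintro e ⟨i, hi, rfl⟩
        simp only [Set.mem_Icc] at hi
        exact hfF i hi.1 hi.2
      · rw [Set.ncard_image_of_injOn hinj,
          show Set.Icc 1 m = ((Finset.Icc 1 m : Finset ℕ) : Set ℕ) by simp,
          Set.ncard_coe_finset]
        simp; omega
      · exact Set.toFinite _
    have hflt' : ∀ i : Fin (m+1), i ≠ 0 → f i.val < i.val := by
      intro i hi
      have h0 : i.val ≠ 0 := fun h => hi (Fin.ext h)
      have h1 := i.isLt
      exact hflt i.val (by omega) (by omega)
    set g : Fin (m+1) → Fin (m+1) :=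
      fun i => if h : i = 0 then 0 else
        ⟨f i.val, by have h2 := hflt' i h; have h3 := i.isLt; omega⟩ with hgdef
    have hg0 : g 0 = 0 := dif_pos rfl
    have hgval : ∀ i : Fin (m+1), i ≠ 0 → (g i).val = f i.val := by
      intro i hi
      rw [hgdef]
      simp [dif_neg hi]
    have hglt : ∀ i : Fin (m+1), i ≠ 0 → g i < i := by
      intro i hi
      rw [Fin.lt_def, hgval i hi]
      exact hflt' i hi
    have hedge : ∀ c : Fin (m+1), c ≠ 0 → s(φ (g c).val, φ c.val) ∈ H.edgeSet := by
      intro c hc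
      rw [hgval c hc]
      have h0 : c.val ≠ 0 := fun h => hc (Fin.ext h)
      have h1 := c.isLt
      exact hfF c.val (by omega) (by omega)
    set φ' : Fin (m+1) → V := fun i => φ i.val with hφ'def
    have homadj : ∀ {a b : Fin (m+1)}, (pgraph g).Adj a b → G.Adj (φ' a) (φ' b) := by
      intro a b hab
      obtain ⟨hne, hor⟩ := pg_adj.mp hab
      have key : ∀ c : Fin (m+1), c ≠ 0 → G.Adj (φ' (g c)) (φ' c) :=
        fun c hc => (SimpleGraph.mem_edgeSet G).mp (H.edgeSet_subset (hedge c hc))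
      rcases hor with ⟨ha, rfl⟩ | ⟨hb, rfl⟩
      · exact (key a ha).symm
      · exact key b hb
    refine ⟨Fin (m+1), inferInstance, pgraph g, pg_isTree hglt hg0,
      ⟨φ', fun {a b} h => homadj h⟩, ?_, by simp⟩
    rw [← hUeq]
    ext e
    constructor
    · rintro ⟨e', he', rfl⟩
      induction e' using Sym2.ind with
      | _ a b =>
        obtain ⟨hne, hor⟩ := pg_adj.mp ((SimpleGraph.mem_edgeSet (pgraph g)).mp he')
        rcases hor with ⟨ha, rfl⟩ | ⟨hb, rfl⟩
        · have h0 : a.val ≠ 0 := fun h => ha (Fin.ext h)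
          have h1 := a.isLt
          refine ⟨a.val, Set.mem_Icc.mpr ⟨by omega, by omega⟩, ?_⟩
          have hv : (g a).val = f a.val := hgval a ha
          calc s(φ (f ↑a), φ ↑a) = s(φ ↑(g a), φ ↑a) := by rw [hv]
            _ = Sym2.map _ s(a, g a) := by
                rw [Sym2.map_pair_eq]; exact Sym2.eq_swap
        · have h0 : b.val ≠ 0 := fun h => hb (Fin.ext h)
          have h1 := b.isLt
          refine ⟨b.val, Set.mem_Icc.mpr ⟨by omega, by omega⟩, ?_⟩
          have hv : (g b).val = f b.val := hgval b hb
          calc s(φ (f ↑b), φ ↑b) = s(φ ↑(g b), φ ↑b) := by rw [hv]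
            _ = Sym2.map _ s(g b, b) := by rw [Sym2.map_pair_eq]; rfl
    · rintro ⟨i, hi, rfl⟩
      simp only [Set.mem_Icc] at hi
      set a : Fin (m+1) := ⟨i, by omega⟩ with hadef
      have ha0 : a ≠ 0 := by
        intro h
        have := Fin.val_eq_of_eq h
        simp [hadef] at this
        omega
      refine ⟨s(a, g a), (SimpleGraph.mem_edgeSet (pgraph g)).mpr
        (pg_adj.mpr ⟨(hglt a ha0).ne', Or.inl ⟨ha0, rfl⟩⟩), ?_⟩
      have hv : (g a).val = f i := hgval a ha0
      calc Sym2.map _ s(a, g a) = s(φ ↑a, φ ↑(g a)) := by rw [Sym2.map_pair_eq]; rfl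
        _ = s(φ (f i), φ i) := by rw [hv]; exact Sym2.eq_swap
end

section
/- Let C and Q be finite multisets of colours with |C| = k, and let C_0 = C ∩ Q be their multiset intersection. Let k_s, k_d, k_i be nonnegative integers (bounds on substitutions, deletions, insertions) and a = min(|C| − |C_0|, |Q| − |C_0|, k_s). Then C can be transformed into Q using at most k_s substitutions, at most k_d deletions, and at most k_i insertions if and only if |C_0| + a ≥ max(|Q| − k_i, k − k_d). -/
/-- `C` can be transformed into `Q` using at most `ks` substitutions, `kd`
deletions and `ki` insertions: there is a common kept part `R` (a sub-multiset
of both `C` and `Q`); the remaining `s + d` elements of `C` are removed by `s`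
substitutions and `d` deletions, and the remaining `s + i` elements of `Q` are
produced by the `s` substitutions and `i` insertions. -/
def CanTransform {α : Type} (C Q : Multiset α) (ks kd ki : ℕ) : Prop :=
  ∃ (s d i : ℕ) (R : Multiset α), s ≤ ks ∧ d ≤ kd ∧ i ≤ ki ∧
    R ≤ C ∧ R ≤ Q ∧
    Multiset.card C = Multiset.card R + s + d ∧
    Multiset.card Q = Multiset.card R + s + i

theorem canTransform_iff {α : Type} [DecidableEq α]
    (C Q : Multiset α) (k ks kd ki : ℕ) (hk : Multiset.card C = k) :
    CanTransform C Q ks kd ki ↔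
      max (Multiset.card Q - ki) (k - kd) ≤
        Multiset.card (C ∩ Q) +
          min (min (Multiset.card C - Multiset.card (C ∩ Q))
                (Multiset.card Q - Multiset.card (C ∩ Q))) ks := by
  have hmc : Multiset.card (C ∩ Q) ≤ Multiset.card C :=
    Multiset.card_le_card (Multiset.inter_le_left)
  have hmq : Multiset.card (C ∩ Q) ≤ Multiset.card Q :=
    Multiset.card_le_card (Multiset.inter_le_right)
  constructor
  · rintro ⟨s, d, i, R, hs, hd, hi, hRC, hRQ, hC, hQ⟩
    have hRm : Multiset.card R ≤ Multiset.card (C ∩ Q) :=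
      Multiset.card_le_card (Multiset.le_inter hRC hRQ)
    omega
  · intro h
    refine ⟨min (min (Multiset.card C - Multiset.card (C ∩ Q))
        (Multiset.card Q - Multiset.card (C ∩ Q))) ks,
      Multiset.card C - (Multiset.card (C ∩ Q) +
        min (min (Multiset.card C - Multiset.card (C ∩ Q))
          (Multiset.card Q - Multiset.card (C ∩ Q))) ks),
      Multiset.card Q - (Multiset.card (C ∩ Q) +
        min (min (Multiset.card C - Multiset.card (C ∩ Q))
          (Multiset.card Q - Multiset.card (C ∩ Q))) ks),
      C ∩ Q, ?_, ?_, ?_, Multiset.inter_le_left, Multiset.inter_le_right, ?_, ?_⟩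
    all_goals omega
end
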